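/- Let l1, l2, l3 ∈ A_L be distinct low-level actions and h ∈ A_H. The process P = τ.(τ.l1.0 + τ.l2.0) + (h.l1.0 + h.l2.0) + l3.0 satisfies P ∈ BSNNI and P ∈ SBSNNI, but P ∉ BrSNNI and P ∉ SBrSNNI. -/
import Mathlib


namespace SecurityNI

/-- Process terms: `0`, action prefix (`none` = τ, `some a` = observable action),
choice, CSP-style parallel composition with synchronization set, restriction,
hiding, and constants (whose defining equations are given by an environment). -/
inductive Proc (A : Type) (C : Type) : Type where
  | nil : Proc A C
  | pre : Option A → Proc A C → Proc A C
  | choice : Proc A C → Proc A C → Proc A C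
  | par : Set A → Proc A C → Proc A C → Proc A C
  | restrict : Proc A C → Set A → Proc A C
  | hide : Proc A C → Set A → Proc A C
  | const : C → Proc A C

variable {A C : Type}

/-- A process term is guarded when every constant occurrence is in the scope
of an action prefix operator. -/
def Guarded : Proc A C → Prop
  | .nil => True
  | .pre _ _ => True
  | .choice p q => Guarded p ∧ Guarded q
  | .par _ p q => Guarded p ∧ Guarded q
  | .restrict p _ => Guarded p
  | .hide p _ => Guarded p
  | .const _ => False

/-- Operational semantics, parameterized by the defining equations `env` of
the constants.  Labels are `Option A`, with `none` playing the role of τ. -/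
inductive Trans (env : C → Proc A C) : Proc A C → Option A → Proc A C → Prop where
  | pre (a : Option A) (p : Proc A C) : Trans env (.pre a p) a p
  | choiceL {p q a p'} (h : Trans env p a p') : Trans env (.choice p q) a p'
  | choiceR {p q a q'} (h : Trans env q a q') : Trans env (.choice p q) a q'
  | parL {L p q a p'} (h : Trans env p a p') (hn : ∀ x, a = some x → x ∉ L) :
      Trans env (.par L p q) a (.par L p' q)
  | parR {L p q a q'} (h : Trans env q a q') (hn : ∀ x, a = some x → x ∉ L) :
      Trans env (.par L p q) a (.par L p q')
  | sync {L p q x p' q'} (h1 : Trans env p (some x) p') (h2 : Trans env q (some x) q')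
      (hx : x ∈ L) : Trans env (.par L p q) (some x) (.par L p' q')
  | res {p a p' L} (h : Trans env p a p') (hn : ∀ x, a = some x → x ∉ L) :
      Trans env (.restrict p L) a (.restrict p' L)
  | hideIn {p x p' L} (h : Trans env p (some x) p') (hx : x ∈ L) :
      Trans env (.hide p L) none (.hide p' L)
  | hideOut {p a p' L} (h : Trans env p a p') (hn : ∀ x, a = some x → x ∉ L) :
      Trans env (.hide p L) a (.hide p' L)
  | const {c a p'} (h : Trans env (env c) a p') : Trans env (.const c) a p'

section LTS

variable {S : Type} (tr : S → Option A → S → Prop)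

/-- Finitely many (possibly zero) τ-transitions. -/
def TauStar : S → S → Prop :=
  Relation.ReflTransGen (fun s s' => tr s none s')

/-- `B` is a branching bisimulation. -/
def IsBranchingBisim (B : S → S → Prop) : Prop :=
  Symmetric B ∧
    ∀ s1 s2, B s1 s2 → ∀ a s1', tr s1 a s1' →
      (a = none ∧ B s1' s2) ∨
      (∃ s2b s2', TauStar tr s2 s2b ∧ tr s2b a s2' ∧ B s1 s2b ∧ B s1' s2')

/-- Branching bisimilarity `≈_b`. -/
def BrBisim (s1 s2 : S) : Prop :=
  ∃ B, IsBranchingBisim tr B ∧ B s1 s2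

/-- `B` is a weak bisimulation. -/
def IsWeakBisim (B : S → S → Prop) : Prop :=
  Symmetric B ∧
    ∀ s1 s2, B s1 s2 →
      (∀ s1', tr s1 none s1' → ∃ s2', TauStar tr s2 s2' ∧ B s1' s2') ∧
      (∀ x s1', tr s1 (some x) s1' →
        ∃ t t' s2', TauStar tr s2 t ∧ tr t (some x) t' ∧ TauStar tr t' s2' ∧ B s1' s2')

/-- Weak bisimilarity `≈`. -/
def WeakBisim (s1 s2 : S) : Prop :=
  ∃ B, IsWeakBisim tr B ∧ B s1 s2

/-- Reachability via finitely many transitions. -/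
def Reach : S → S → Prop :=
  Relation.ReflTransGen (fun s s' => ∃ a, tr s a s')

end LTS

section Security

variable (env : C → Proc A C) (AH : Set A)

/-- `P ∈ BrSNNI` iff `P∖A_H ≈_b P/A_H`. -/
def BrSNNI (p : Proc A C) : Prop :=
  BrBisim (Trans env) (.restrict p AH) (.hide p AH)

/-- All processes reachable from `q` perform only actions in `AH`. -/
def HighOnly (q : Proc A C) : Prop :=
  ∀ q', Reach (Trans env) q q' → ∀ a q'', Trans env q' a q'' → ∃ h ∈ AH, a = some h

/-- `P ∈ BrNDC` iff `P∖A_H ≈_b ((P ∥_L Q)/L)∖A_H` for every high-level `Q`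
and every `L ⊆ A_H`. -/
def BrNDC (p : Proc A C) : Prop :=
  ∀ q, HighOnly env AH q → ∀ L, L ⊆ AH →
    BrBisim (Trans env) (.restrict p AH) (.restrict (.hide (.par L p q) L) AH)

/-- `P ∈ SBrSNNI` iff every reachable process is BrSNNI. -/
def SBrSNNI (p : Proc A C) : Prop :=
  ∀ p', Reach (Trans env) p p' → BrSNNI env AH p'

/-- `P ∈ P_BrNDC` iff every reachable process is BrNDC. -/
def PBrNDC (p : Proc A C) : Prop :=
  ∀ p', Reach (Trans env) p p' → BrNDC env AH p'

/-- `P ∈ SBrNDC` iff for every reachable `P'` and every high transition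
`P' --h→ P''`, `P'∖A_H ≈_b P''∖A_H`. -/
def SBrNDC (p : Proc A C) : Prop :=
  ∀ p' p'', Reach (Trans env) p p' → ∀ h ∈ AH, Trans env p' (some h) p'' →
    BrBisim (Trans env) (.restrict p' AH) (.restrict p'' AH)

/-- `P ∈ BSNNI` iff `P∖A_H ≈ P/A_H`. -/
def BSNNI (p : Proc A C) : Prop :=
  WeakBisim (Trans env) (.restrict p AH) (.hide p AH)

/-- `P ∈ BNDC` iff `P∖A_H ≈ ((P ∥_L Q)/L)∖A_H` for every high-level `Q`
and every `L ⊆ A_H`. -/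
def BNDC (p : Proc A C) : Prop :=
  ∀ q, HighOnly env AH q → ∀ L, L ⊆ AH →
    WeakBisim (Trans env) (.restrict p AH) (.restrict (.hide (.par L p q) L) AH)

/-- `P ∈ SBSNNI` iff every reachable process is BSNNI. -/
def SBSNNI (p : Proc A C) : Prop :=
  ∀ p', Reach (Trans env) p p' → BSNNI env AH p'

/-- `P ∈ P_BNDC` iff every reachable process is BNDC. -/
def PBNDC (p : Proc A C) : Prop :=
  ∀ p', Reach (Trans env) p p' → BNDC env AH p'

/-- `P ∈ SBNDC` iff for every reachable `P'` and every high transition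
`P' --h→ P''`, `P'∖A_H ≈ P''∖A_H`. -/
def SBNDC (p : Proc A C) : Prop :=
  ∀ p' p'', Reach (Trans env) p p' → ∀ h ∈ AH, Trans env p' (some h) p'' →
    WeakBisim (Trans env) (.restrict p' AH) (.restrict p'' AH)

/-- No high-level actions occur in `p`: no process reachable from `p`
can perform a high-level action. -/
def NoHigh (p : Proc A C) : Prop :=
  ∀ p', Reach (Trans env) p p' → ∀ h ∈ AH, ∀ p'', ¬ Trans env p' (some h) p''

end Security

section Cex

variable {A C : Type} (env : C → Proc A C) (AH : Set A) {h l1 l2 l3 : A}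

/-- Abbreviations for the subterms of the counterexample process. -/
abbrev ZZ : Proc A C := .nil
abbrev LL (a : A) : Proc A C := .pre (some a) .nil
abbrev QQ (l1 l2 : A) : Proc A C :=
  .choice (.pre none (LL l1)) (.pre none (LL l2))
abbrev PP (h l1 l2 l3 : A) : Proc A C :=
  .choice (.pre none (QQ l1 l2))
    (.choice (.choice (.pre (some h) (LL l1)) (.pre (some h) (LL l2))) (LL l3))

lemma hn_none {S : Set A} : ∀ x : A, (none : Option A) = some x → x ∉ S :=
  fun _ hx => nomatch hx

lemma hn_some {S : Set A} {a : A} (ha : a ∉ S) :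
    ∀ x : A, (some a : Option A) = some x → x ∉ S := by
  intro x hx; cases hx; exact ha

lemma trans_nil {b : Option A} {s' : Proc A C} (t : Trans env .nil b s') : False := by
  nomatch t

lemma trans_LL {a : A} {b : Option A} {s' : Proc A C} (t : Trans env (LL a) b s') :
    b = some a ∧ s' = ZZ := by
  cases t; exact ⟨rfl, rfl⟩

lemma trans_QQ {b : Option A} {s' : Proc A C} (t : Trans env (QQ l1 l2) b s') :
    b = none ∧ (s' = LL l1 ∨ s' = LL l2) := by
  cases t with
  | choiceL t => cases t; exact ⟨rfl, .inl rfl⟩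
  | choiceR t => cases t; exact ⟨rfl, .inr rfl⟩

lemma trans_PP {b : Option A} {s' : Proc A C} (t : Trans env (PP h l1 l2 l3) b s') :
    (b = none ∧ s' = QQ l1 l2) ∨ (b = some h ∧ (s' = LL l1 ∨ s' = LL l2)) ∨
      (b = some l3 ∧ s' = ZZ) := by
  cases t with
  | choiceL t => cases t; exact .inl ⟨rfl, rfl⟩
  | choiceR t =>
    cases t with
    | choiceL t =>
      cases t with
      | choiceL t => cases t; exact .inr (.inl ⟨rfl, .inl rfl⟩)
      | choiceR t => cases t; exact .inr (.inl ⟨rfl, .inr rfl⟩)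
    | choiceR t => cases t; exact .inr (.inr ⟨rfl, rfl⟩)

lemma trans_res {p : Proc A C} {L : Set A} {b : Option A} {s' : Proc A C}
    (t : Trans env (.restrict p L) b s') :
    ∃ p', Trans env p b p' ∧ s' = .restrict p' L ∧ ∀ x, b = some x → x ∉ L := by
  cases t with
  | res t hn => exact ⟨_, t, rfl, hn⟩

lemma trans_hide {p : Proc A C} {L : Set A} {b : Option A} {s' : Proc A C}
    (t : Trans env (.hide p L) b s') :
    (∃ x p', Trans env p (some x) p' ∧ x ∈ L ∧ b = none ∧ s' = .hide p' L) ∨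
    (∃ p', Trans env p b p' ∧ (∀ x, b = some x → x ∉ L) ∧ s' = .hide p' L) := by
  cases t with
  | hideIn t hx => exact .inl ⟨_, _, t, hx, rfl, rfl⟩
  | hideOut t hn => exact .inr ⟨_, t, hn, rfl⟩

lemma tPP_tau : Trans env (PP h l1 l2 l3) none (QQ l1 l2) := .choiceL (.pre _ _)
lemma tPP_h1 : Trans env (PP h l1 l2 l3) (some h) (LL l1) :=
  .choiceR (.choiceL (.choiceL (.pre _ _)))
lemma tPP_l3 : Trans env (PP h l1 l2 l3) (some l3) ZZ := .choiceR (.choiceR (.pre _ _))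
lemma tQQ_1 : Trans env (QQ l1 l2) none (LL l1) := .choiceL (.pre _ _)
lemma tQQ_2 : Trans env (QQ l1 l2) none (LL l2) := .choiceR (.pre _ _)
lemma tLL {a : A} : Trans env (LL a) (some a) (ZZ : Proc A C) := .pre _ _

/-- The weak bisimulation witnessing (S)BSNNI of the counterexample process. -/
def BW (AH : Set A) (h l1 l2 l3 : A) (x y : Proc A C) : Prop :=
  (x = .restrict (PP h l1 l2 l3) AH ∧ y = .hide (PP h l1 l2 l3) AH) ∨
  (y = .restrict (PP h l1 l2 l3) AH ∧ x = .hide (PP h l1 l2 l3) AH) ∨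
  (x = .restrict (QQ l1 l2) AH ∧ y = .hide (QQ l1 l2) AH) ∨
  (y = .restrict (QQ l1 l2) AH ∧ x = .hide (QQ l1 l2) AH) ∨
  (x = .restrict (LL l1) AH ∧ y = .hide (LL l1) AH) ∨
  (y = .restrict (LL l1) AH ∧ x = .hide (LL l1) AH) ∨
  (x = .restrict (LL l2) AH ∧ y = .hide (LL l2) AH) ∨
  (y = .restrict (LL l2) AH ∧ x = .hide (LL l2) AH) ∨
  (x = .restrict (ZZ : Proc A C) AH ∧ y = .hide ZZ AH) ∨
  (y = .restrict (ZZ : Proc A C) AH ∧ x = .hide ZZ AH)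


lemma bw1 : BW (C := C) AH h l1 l2 l3 (.restrict (PP h l1 l2 l3) AH) (.hide (PP h l1 l2 l3) AH) :=
  .inl ⟨rfl, rfl⟩
lemma bw1' : BW (C := C) AH h l1 l2 l3 (.hide (PP h l1 l2 l3) AH) (.restrict (PP h l1 l2 l3) AH) :=
  .inr (.inl ⟨rfl, rfl⟩)
lemma bw2 : BW (C := C) AH h l1 l2 l3 (.restrict (QQ l1 l2) AH) (.hide (QQ l1 l2) AH) :=
  .inr (.inr (.inl ⟨rfl, rfl⟩))
lemma bw2' : BW (C := C) AH h l1 l2 l3 (.hide (QQ l1 l2) AH) (.restrict (QQ l1 l2) AH) :=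
  .inr (.inr (.inr (.inl ⟨rfl, rfl⟩)))
lemma bw3 : BW (C := C) AH h l1 l2 l3 (.restrict (LL l1) AH) (.hide (LL l1) AH) :=
  .inr (.inr (.inr (.inr (.inl ⟨rfl, rfl⟩))))
lemma bw3' : BW (C := C) AH h l1 l2 l3 (.hide (LL l1) AH) (.restrict (LL l1) AH) :=
  .inr (.inr (.inr (.inr (.inr (.inl ⟨rfl, rfl⟩)))))
lemma bw4 : BW (C := C) AH h l1 l2 l3 (.restrict (LL l2) AH) (.hide (LL l2) AH) :=
  .inr (.inr (.inr (.inr (.inr (.inr (.inl ⟨rfl, rfl⟩))))))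
lemma bw4' : BW (C := C) AH h l1 l2 l3 (.hide (LL l2) AH) (.restrict (LL l2) AH) :=
  .inr (.inr (.inr (.inr (.inr (.inr (.inr (.inl ⟨rfl, rfl⟩)))))))
lemma bw5 : BW (C := C) AH h l1 l2 l3 (.restrict (ZZ : Proc A C) AH) (.hide ZZ AH) :=
  .inr (.inr (.inr (.inr (.inr (.inr (.inr (.inr (.inl ⟨rfl, rfl⟩))))))))
lemma bw5' : BW (C := C) AH h l1 l2 l3 (.hide (ZZ : Proc A C) AH) (.restrict ZZ AH) :=
  .inr (.inr (.inr (.inr (.inr (.inr (.inr (.inr (.inr ⟨rfl, rfl⟩))))))))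

theorem bw_weak (hl1 : l1 ∉ AH) (hl2 : l2 ∉ AH) (hl3 : l3 ∉ AH) (hh : h ∈ AH) :
    IsWeakBisim (Trans env) (BW AH h l1 l2 l3) := by
  constructor
  · intro x y hxy
    rcases hxy with h|h|h|h|h|h|h|h|h|h
    exacts [.inr (.inl h), .inl h,
      .inr (.inr (.inr (.inl h))), .inr (.inr (.inl h)),
      .inr (.inr (.inr (.inr (.inr (.inl h))))), .inr (.inr (.inr (.inr (.inl h)))),
      .inr (.inr (.inr (.inr (.inr (.inr (.inr (.inl h))))))),
      .inr (.inr (.inr (.inr (.inr (.inr (.inl h)))))),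
      .inr (.inr (.inr (.inr (.inr (.inr (.inr (.inr (.inr h)))))))),
      .inr (.inr (.inr (.inr (.inr (.inr (.inr (.inr (.inl h))))))))]
  · intro s1 s2 hB
    rcases hB with ⟨rfl, rfl⟩ | ⟨rfl, rfl⟩ | ⟨rfl, rfl⟩ | ⟨rfl, rfl⟩ | ⟨rfl, rfl⟩ |
      ⟨rfl, rfl⟩ | ⟨rfl, rfl⟩ | ⟨rfl, rfl⟩ | ⟨rfl, rfl⟩ | ⟨rfl, rfl⟩
    -- P∖ vs P/
    · refine ⟨?_, ?_⟩
      · intro s1' ht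
        rcases trans_res env ht with ⟨p', hp, rfl, -⟩
        rcases trans_PP env hp with ⟨-, rfl⟩ | ⟨hb, -⟩ | ⟨hb, -⟩
        · exact ⟨.hide (QQ l1 l2) AH,
            Relation.ReflTransGen.single (.hideOut (tPP_tau env) hn_none),
            bw2 AH⟩
        · simp at hb
        · simp at hb
      · intro x s1' ht
        rcases trans_res env ht with ⟨p', hp, rfl, hn⟩
        rcases trans_PP env hp with ⟨hb, -⟩ | ⟨hb, -⟩ | ⟨hb, rfl⟩
        · simp at hb
        · obtain rfl := Option.some.inj hb; exact absurd hh (hn _ rfl)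
        · obtain rfl := Option.some.inj hb
          exact ⟨_, _, _, Relation.ReflTransGen.refl,
            .hideOut (tPP_l3 env) (hn_some hl3), Relation.ReflTransGen.refl,
            bw5 AH⟩
    -- P/ vs P∖
    · refine ⟨?_, ?_⟩
      · intro s1' ht
        rcases trans_hide env ht with ⟨x, p', hp, hx, -, rfl⟩ | ⟨p', hp, -, rfl⟩
        · rcases trans_PP env hp with ⟨hb, -⟩ | ⟨hb, hs⟩ | ⟨hb, rfl⟩
          · simp at hb
          · obtain rfl := Option.some.inj hb
            rcases hs with rfl | rfl
            · exact ⟨.restrict (LL l1) AH,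
                (Relation.ReflTransGen.single (.res (tPP_tau env) hn_none)).tail
                  (.res (tQQ_1 env) hn_none), bw3' AH⟩
            · exact ⟨.restrict (LL l2) AH,
                (Relation.ReflTransGen.single (.res (tPP_tau env) hn_none)).tail
                  (.res (tQQ_2 env) hn_none), bw4' AH⟩
          · obtain rfl := Option.some.inj hb; exact absurd hx hl3
        · rcases trans_PP env hp with ⟨-, rfl⟩ | ⟨hb, -⟩ | ⟨hb, -⟩
          · exact ⟨.restrict (QQ l1 l2) AH,
              Relation.ReflTransGen.single (.res (tPP_tau env) hn_none),
              bw2' AH⟩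
          · simp at hb
          · simp at hb
      · intro x s1' ht
        rcases trans_hide env ht with ⟨y, p', hp, hy, hb, -⟩ | ⟨p', hp, hn, rfl⟩
        · simp at hb
        · rcases trans_PP env hp with ⟨hb, -⟩ | ⟨hb, -⟩ | ⟨hb, rfl⟩
          · simp at hb
          · obtain rfl := Option.some.inj hb; exact absurd hh (hn _ rfl)
          · obtain rfl := Option.some.inj hb
            exact ⟨_, _, _, Relation.ReflTransGen.refl,
              .res (tPP_l3 env) (hn_some hl3), Relation.ReflTransGen.refl,
              bw5' AH⟩
    -- Q∖ vs Q/
    · refine ⟨?_, ?_⟩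
      · intro s1' ht
        rcases trans_res env ht with ⟨p', hp, rfl, -⟩
        obtain ⟨-, hs⟩ := trans_QQ env hp
        rcases hs with rfl | rfl
        · exact ⟨.hide (LL l1) AH,
            Relation.ReflTransGen.single (.hideOut (tQQ_1 env) hn_none),
            bw3 AH⟩
        · exact ⟨.hide (LL l2) AH,
            Relation.ReflTransGen.single (.hideOut (tQQ_2 env) hn_none),
            bw4 AH⟩
      · intro x s1' ht
        rcases trans_res env ht with ⟨p', hp, rfl, -⟩
        obtain ⟨hb, -⟩ := trans_QQ env hp
        simp at hb
    -- Q/ vs Q∖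
    · refine ⟨?_, ?_⟩
      · intro s1' ht
        rcases trans_hide env ht with ⟨x, p', hp, hx, -, rfl⟩ | ⟨p', hp, -, rfl⟩
        · obtain ⟨hb, -⟩ := trans_QQ env hp
          simp at hb
        · obtain ⟨-, hs⟩ := trans_QQ env hp
          rcases hs with rfl | rfl
          · exact ⟨.restrict (LL l1) AH,
              Relation.ReflTransGen.single (.res (tQQ_1 env) hn_none),
              bw3' AH⟩
          · exact ⟨.restrict (LL l2) AH,
              Relation.ReflTransGen.single (.res (tQQ_2 env) hn_none),
              bw4' AH⟩
      · intro x s1' ht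
        rcases trans_hide env ht with ⟨y, p', hp, hy, hb, -⟩ | ⟨p', hp, -, rfl⟩
        · simp at hb
        · obtain ⟨hb, -⟩ := trans_QQ env hp
          simp at hb
    -- L1∖ vs L1/
    · refine ⟨?_, ?_⟩
      · intro s1' ht
        rcases trans_res env ht with ⟨p', hp, rfl, -⟩
        obtain ⟨hb, -⟩ := trans_LL env hp
        simp at hb
      · intro x s1' ht
        rcases trans_res env ht with ⟨p', hp, rfl, -⟩
        obtain ⟨hb, rfl⟩ := trans_LL env hp
        obtain rfl := Option.some.inj hb
        exact ⟨_, _, _, Relation.ReflTransGen.refl,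
          .hideOut (tLL env) (hn_some hl1), Relation.ReflTransGen.refl,
          bw5 AH⟩
    -- L1/ vs L1∖
    · refine ⟨?_, ?_⟩
      · intro s1' ht
        rcases trans_hide env ht with ⟨x, p', hp, hx, -, rfl⟩ | ⟨p', hp, -, rfl⟩
        · obtain ⟨hb, -⟩ := trans_LL env hp
          obtain rfl := Option.some.inj hb
          exact absurd hx hl1
        · obtain ⟨hb, -⟩ := trans_LL env hp
          simp at hb
      · intro x s1' ht
        rcases trans_hide env ht with ⟨y, p', hp, hy, hb, -⟩ | ⟨p', hp, -, rfl⟩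
        · simp at hb
        · obtain ⟨hb, rfl⟩ := trans_LL env hp
          obtain rfl := Option.some.inj hb
          exact ⟨_, _, _, Relation.ReflTransGen.refl,
            .res (tLL env) (hn_some hl1), Relation.ReflTransGen.refl,
            bw5' AH⟩
    -- L2∖ vs L2/
    · refine ⟨?_, ?_⟩
      · intro s1' ht
        rcases trans_res env ht with ⟨p', hp, rfl, -⟩
        obtain ⟨hb, -⟩ := trans_LL env hp
        simp at hb
      · intro x s1' ht
        rcases trans_res env ht with ⟨p', hp, rfl, -⟩
        obtain ⟨hb, rfl⟩ := trans_LL env hp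
        obtain rfl := Option.some.inj hb
        exact ⟨_, _, _, Relation.ReflTransGen.refl,
          .hideOut (tLL env) (hn_some hl2), Relation.ReflTransGen.refl,
          bw5 AH⟩
    -- L2/ vs L2∖
    · refine ⟨?_, ?_⟩
      · intro s1' ht
        rcases trans_hide env ht with ⟨x, p', hp, hx, -, rfl⟩ | ⟨p', hp, -, rfl⟩
        · obtain ⟨hb, -⟩ := trans_LL env hp
          obtain rfl := Option.some.inj hb
          exact absurd hx hl2
        · obtain ⟨hb, -⟩ := trans_LL env hp
          simp at hb
      · intro x s1' ht
        rcases trans_hide env ht with ⟨y, p', hp, hy, hb, -⟩ | ⟨p', hp, -, rfl⟩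
        · simp at hb
        · obtain ⟨hb, rfl⟩ := trans_LL env hp
          obtain rfl := Option.some.inj hb
          exact ⟨_, _, _, Relation.ReflTransGen.refl,
            .res (tLL env) (hn_some hl2), Relation.ReflTransGen.refl,
            bw5' AH⟩
    -- Z∖ vs Z/
    · refine ⟨?_, ?_⟩
      · intro s1' ht
        rcases trans_res env ht with ⟨p', hp, -, -⟩
        exact (trans_nil env hp).elim
      · intro x s1' ht
        rcases trans_res env ht with ⟨p', hp, -, -⟩
        exact (trans_nil env hp).elim
    -- Z/ vs Z∖
    · refine ⟨?_, ?_⟩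
      · intro s1' ht
        rcases trans_hide env ht with ⟨x, p', hp, -, -, -⟩ | ⟨p', hp, -, -⟩ <;>
          exact (trans_nil env hp).elim
      · intro x s1' ht
        rcases trans_hide env ht with ⟨y, p', hp, -, -, -⟩ | ⟨p', hp, -, -⟩ <;>
          exact (trans_nil env hp).elim

theorem reach_PP {p' : Proc A C} (hr : Reach (Trans env) (PP h l1 l2 l3) p') :
    p' = PP h l1 l2 l3 ∨ p' = QQ l1 l2 ∨ p' = LL l1 ∨ p' = LL l2 ∨ p' = ZZ := by
  have hr' : Relation.ReflTransGen (fun s s' => ∃ a, Trans env s a s')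
      (PP h l1 l2 l3) p' := hr
  clear hr
  induction hr' with
  | refl => exact .inl rfl
  | tail _ step ih =>
    obtain ⟨a, t⟩ := step
    rcases ih with rfl | rfl | rfl | rfl | rfl
    · rcases trans_PP env t with ⟨-, rfl⟩ | ⟨-, hs⟩ | ⟨-, rfl⟩
      · exact .inr (.inl rfl)
      · rcases hs with rfl | rfl
        · exact .inr (.inr (.inl rfl))
        · exact .inr (.inr (.inr (.inl rfl)))
      · exact .inr (.inr (.inr (.inr rfl)))
    · obtain ⟨-, hs⟩ := trans_QQ env t
      rcases hs with rfl | rfl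
      · exact .inr (.inr (.inl rfl))
      · exact .inr (.inr (.inr (.inl rfl)))
    · obtain ⟨-, rfl⟩ := trans_LL env t
      exact .inr (.inr (.inr (.inr rfl)))
    · obtain ⟨-, rfl⟩ := trans_LL env t
      exact .inr (.inr (.inr (.inr rfl)))
    · exact (trans_nil env t).elim

theorem taustar_Pres {s : Proc A C}
    (hr : TauStar (Trans env) (.restrict (PP h l1 l2 l3) AH) s) :
    s = .restrict (PP h l1 l2 l3) AH ∨ s = .restrict (QQ l1 l2) AH ∨
      s = .restrict (LL l1) AH ∨ s = .restrict (LL l2) AH := by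
  have hr' : Relation.ReflTransGen (fun s s' => Trans env s none s')
      (.restrict (PP h l1 l2 l3) AH) s := hr
  clear hr
  induction hr' with
  | refl => exact .inl rfl
  | tail _ step ih =>
    rcases ih with rfl | rfl | rfl | rfl
    · rcases trans_res env step with ⟨p', hp, rfl, -⟩
      rcases trans_PP env hp with ⟨-, rfl⟩ | ⟨hb, -⟩ | ⟨hb, -⟩
      · exact .inr (.inl rfl)
      · simp at hb
      · simp at hb
    · rcases trans_res env step with ⟨p', hp, rfl, -⟩
      obtain ⟨-, hs⟩ := trans_QQ env hp
      rcases hs with rfl | rfl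
      · exact .inr (.inr (.inl rfl))
      · exact .inr (.inr (.inr rfl))
    · rcases trans_res env step with ⟨p', hp, -, -⟩
      obtain ⟨hb, -⟩ := trans_LL env hp
      simp at hb
    · rcases trans_res env step with ⟨p', hp, -, -⟩
      obtain ⟨hb, -⟩ := trans_LL env hp
      simp at hb

theorem no_tau_L1hide (hl1 : l1 ∉ AH) {s : Proc A C}
    (ht : Trans env (.hide (LL l1) AH) none s) : False := by
  rcases trans_hide env ht with ⟨x, p', hp, hx, -, -⟩ | ⟨p', hp, -, -⟩
  · obtain ⟨hb, -⟩ := trans_LL env hp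
    obtain rfl := Option.some.inj hb
    exact hl1 hx
  · obtain ⟨hb, -⟩ := trans_LL env hp
    simp at hb

theorem taustar_L1hide (hl1 : l1 ∉ AH) {s : Proc A C}
    (hr : TauStar (Trans env) (.hide (LL l1) AH) s) : s = .hide (LL l1) AH := by
  have hr' : Relation.ReflTransGen (fun s s' => Trans env s none s')
      (.hide (LL l1) AH) s := hr
  clear hr
  induction hr' with
  | refl => rfl
  | tail _ step ih =>
    subst ih
    exact (no_tau_L1hide env AH hl1 step).elim

theorem taustar_Qres {s : Proc A C}
    (hr : TauStar (Trans env) (.restrict (QQ l1 l2) AH) s) :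
    s = .restrict (QQ l1 l2) AH ∨ s = .restrict (LL l1) AH ∨ s = .restrict (LL l2) AH := by
  have hr' : Relation.ReflTransGen (fun s s' => Trans env s none s')
      (.restrict (QQ l1 l2) AH) s := hr
  clear hr
  induction hr' with
  | refl => exact .inl rfl
  | tail _ step ih =>
    rcases ih with rfl | rfl | rfl
    · rcases trans_res env step with ⟨p', hp, rfl, -⟩
      obtain ⟨-, hs⟩ := trans_QQ env hp
      rcases hs with rfl | rfl
      · exact .inr (.inl rfl)
      · exact .inr (.inr rfl)
    · rcases trans_res env step with ⟨p', hp, -, -⟩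
      obtain ⟨hb, -⟩ := trans_LL env hp
      simp at hb
    · rcases trans_res env step with ⟨p', hp, -, -⟩
      obtain ⟨hb, -⟩ := trans_LL env hp
      simp at hb

section Contra

variable {B : Proc A C → Proc A C → Prop}

/-- `L1/` cannot be branching-bisimilar to `P∖`. -/
theorem contra1 (hl1 : l1 ∉ AH) (hl3 : l3 ∉ AH) (h13 : l1 ≠ l3)
    (hbb : IsBranchingBisim (Trans env) B)
    (hB : B (.hide (LL l1) AH) (.restrict (PP h l1 l2 l3) AH)) : False := by
  obtain ⟨hsym, hstep⟩ := hbb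
  rcases hstep _ _ (hsym hB) (some l3) (.restrict ZZ AH)
      (.res (tPP_l3 env) (hn_some hl3)) with ⟨hb, -⟩ | ⟨s2b, s2', hts, ht, -, -⟩
  · simp at hb
  · obtain rfl := taustar_L1hide env AH hl1 hts
    rcases trans_hide env ht with ⟨x, p', hp, hx, hb, -⟩ | ⟨p', hp, -, -⟩
    · simp at hb
    · obtain ⟨hb, -⟩ := trans_LL env hp
      exact h13 (Option.some.inj hb).symm

/-- `L1/` cannot be branching-bisimilar to `Q∖`. -/
theorem contra2 (hl1 : l1 ∉ AH) (hl2 : l2 ∉ AH) (h12 : l1 ≠ l2)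
    (hbb : IsBranchingBisim (Trans env) B)
    (hB : B (.hide (LL l1) AH) (.restrict (QQ l1 l2) AH)) : False := by
  obtain ⟨hsym, hstep⟩ := hbb
  rcases hstep _ _ (hsym hB) none (.restrict (LL l2) AH)
      (.res (tQQ_2 env) hn_none) with ⟨-, hB2⟩ | ⟨s2b, s2', hts, ht, -, -⟩
  · rcases hstep _ _ hB2 (some l2) (.restrict ZZ AH)
        (.res (tLL env) (hn_some hl2)) with ⟨hb, -⟩ | ⟨s2b, s2', hts, ht, -, -⟩
    · simp at hb
    · obtain rfl := taustar_L1hide env AH hl1 hts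
      rcases trans_hide env ht with ⟨x, p', hp, hx, hb, -⟩ | ⟨p', hp, -, -⟩
      · simp at hb
      · obtain ⟨hb, -⟩ := trans_LL env hp
        exact h12 (Option.some.inj hb).symm
  · obtain rfl := taustar_L1hide env AH hl1 hts
    exact no_tau_L1hide env AH hl1 ht

/-- `P/` cannot be branching-bisimilar to `Q∖`. -/
theorem contra3 (hl3 : l3 ∉ AH) (h13 : l1 ≠ l3) (h23 : l2 ≠ l3)
    (hbb : IsBranchingBisim (Trans env) B)
    (hB : B (.hide (PP h l1 l2 l3) AH) (.restrict (QQ l1 l2) AH)) : False := by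
  obtain ⟨hsym, hstep⟩ := hbb
  rcases hstep _ _ hB (some l3) (.hide ZZ AH)
      (.hideOut (tPP_l3 env) (hn_some hl3)) with ⟨hb, -⟩ | ⟨s2b, s2', hts, ht, -, -⟩
  · simp at hb
  · rcases taustar_Qres env AH hts with rfl | rfl | rfl
    · rcases trans_res env ht with ⟨p', hp, -, -⟩
      obtain ⟨hb, -⟩ := trans_QQ env hp
      simp at hb
    · rcases trans_res env ht with ⟨p', hp, -, -⟩
      obtain ⟨hb, -⟩ := trans_LL env hp
      exact h13 (Option.some.inj hb).symm
    · rcases trans_res env ht with ⟨p', hp, -, -⟩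
      obtain ⟨hb, -⟩ := trans_LL env hp
      exact h23 (Option.some.inj hb).symm

end Contra

theorem not_brbisim_PP (hl1 : l1 ∉ AH) (hl2 : l2 ∉ AH) (hl3 : l3 ∉ AH)
    (h12 : l1 ≠ l2) (h13 : l1 ≠ l3) (h23 : l2 ≠ l3) (hh : h ∈ AH) :
    ¬ BrBisim (Trans env) (.restrict (PP h l1 l2 l3) AH) (.hide (PP h l1 l2 l3) AH) := by
  rintro ⟨B, hbb, hB⟩
  obtain ⟨hsym, hstep⟩ := hbb
  rcases hstep _ _ (hsym hB) none (.hide (LL l1) AH)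
      (.hideIn (tPP_h1 env) hh) with ⟨-, hB2⟩ | ⟨s2b, s2', hts, ht, hBb, hB2⟩
  · exact contra1 env AH hl1 hl3 h13 ⟨hsym, hstep⟩ hB2
  · rcases taustar_Pres env AH hts with rfl | rfl | rfl | rfl
    · rcases trans_res env ht with ⟨p', hp, rfl, -⟩
      rcases trans_PP env hp with ⟨-, rfl⟩ | ⟨hb, -⟩ | ⟨hb, -⟩
      · exact contra2 env AH hl1 hl2 h12 ⟨hsym, hstep⟩ hB2
      · simp at hb
      · simp at hb
    · exact contra3 env AH hl3 h13 h23 ⟨hsym, hstep⟩ hBb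
    · rcases trans_res env ht with ⟨p', hp, -, -⟩
      obtain ⟨hb, -⟩ := trans_LL env hp
      simp at hb
    · rcases trans_res env ht with ⟨p', hp, -, -⟩
      obtain ⟨hb, -⟩ := trans_LL env hp
      simp at hb

end Cex

/-- the process τ.(τ.l1.0 + τ.l2.0) + (h.l1.0 + h.l2.0) + l3.0
is BSNNI and SBSNNI but neither BrSNNI nor SBrSNNI. -/
theorem cex_tau_axiom_2 {A C : Type} (env : C → Proc A C)
    (hguard : ∀ c, Guarded (env c)) (AH : Set A)
    (l1 l2 l3 : A) (hl1 : l1 ∉ AH) (hl2 : l2 ∉ AH) (hl3 : l3 ∉ AH)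
    (h12 : l1 ≠ l2) (h13 : l1 ≠ l3) (h23 : l2 ≠ l3)
    (h : A) (hh : h ∈ AH) :
    ∀ P : Proc A C,
      P = Proc.choice
            (Proc.pre none
              (Proc.choice (Proc.pre none (Proc.pre (some l1) Proc.nil))
                           (Proc.pre none (Proc.pre (some l2) Proc.nil))))
            (Proc.choice
              (Proc.choice (Proc.pre (some h) (Proc.pre (some l1) Proc.nil))
                           (Proc.pre (some h) (Proc.pre (some l2) Proc.nil)))
              (Proc.pre (some l3) Proc.nil)) →
      BSNNI env AH P ∧ SBSNNI env AH P ∧ ¬ BrSNNI env AH P ∧ ¬ SBrSNNI env AH P := by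
  intro P hP
  subst hP
  have hw := bw_weak env AH hl1 hl2 hl3 hh
  have hsb : SBSNNI env AH (PP h l1 l2 l3) := by
    intro p' hr
    rcases reach_PP env hr with rfl | rfl | rfl | rfl | rfl
    · exact ⟨_, hw, bw1 AH⟩
    · exact ⟨_, hw, bw2 AH⟩
    · exact ⟨_, hw, bw3 AH⟩
    · exact ⟨_, hw, bw4 AH⟩
    · exact ⟨_, hw, bw5 AH⟩
  have hnbr : ¬ BrSNNI env AH (PP h l1 l2 l3) :=
    not_brbisim_PP env AH hl1 hl2 hl3 h12 h13 h23 hh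
  exact ⟨hsb _ Relation.ReflTransGen.refl, hsb, hnbr,
    fun hs => hnbr (hs _ Relation.ReflTransGen.refl)⟩


end SecurityNI
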